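/- For all integers k ≥ 0, n ≥ 0 and every fixed x ∈ ℝ, the k-th derivative of the Kravchuk polynomial with respect to a satisfies d^k/da^k K_n(x,a) = ∑_{i=0}^{n−k} K_i(x,a) · (k!/(n−i)!) · s(n−i, k), where the sum is empty (so the derivative is 0) when k > n. -/

import Mathlib

open Polynomial Finset

/-- Generalized binomial coefficient `C(t, k) = t(t-1)⋯(t-k+1)/k!` of a real number. -/
noncomputable def genBinom (t : ℝ) (k : ℕ) : ℝ :=
  (∏ j ∈ Finset.range k, (t - j)) / (Nat.factorial k)

/-- The binary Kravchuk polynomial `K_n(x,a) = ∑_{i=0}^n (-1)^i C(x,i) C(a-x, n-i)`. -/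
noncomputable def K (n : ℕ) (x a : ℝ) : ℝ :=
  ∑ i ∈ Finset.range (n + 1), (-1 : ℝ) ^ i * genBinom x i * genBinom (a - x) (n - i)

/-- Signed Stirling numbers of the first kind: `t(t-1)⋯(t-m+1) = ∑_k s(m,k) t^k`. -/
noncomputable def stirling1 (m k : ℕ) : ℝ := (descPochhammer ℝ m).coeff k

lemma stirling1_of_lt {m k : ℕ} (h : m < k) : stirling1 m k = 0 := by
  unfold stirling1
  apply Polynomial.coeff_eq_zero_of_natDegree_lt
  rwa [descPochhammer_natDegree]

lemma stirling1_zero_right (m : ℕ) : stirling1 m 0 = if m = 0 then 1 else 0 := by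
  unfold stirling1
  rw [Polynomial.coeff_zero_eq_eval_zero, descPochhammer_eval_zero]

lemma stirling1_rec (p k : ℕ) :
    stirling1 (p+1) (k+1) = stirling1 p k - (p:ℝ) * stirling1 p (k+1) := by
  unfold stirling1
  rw [descPochhammer_succ_right, ← C_eq_natCast, mul_sub, coeff_sub, coeff_mul_X, coeff_mul_C]
  ring

lemma iter_deriv_mul_X_sub_C (c : ℝ) (k : ℕ) : ∀ p : ℝ[X],
    derivative^[k+1] (p * (X - C c))
      = derivative^[k+1] p * (X - C c) + ((k+1 : ℕ) : ℝ) • derivative^[k] p := by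
  induction k with
  | zero => intro p; simp [derivative_mul]
  | succ k ih =>
    intro p
    rw [Function.iterate_succ_apply' derivative (k+1) (p * (X - C c)), ih p, derivative_add,
      derivative_mul, derivative_sub, derivative_X, derivative_C, derivative_smul,
      ← Function.iterate_succ_apply' derivative (k+1) p,
      ← Function.iterate_succ_apply' derivative k p]
    simp only [smul_eq_C_mul, Nat.cast_succ, map_add, map_one]
    ring

noncomputable def coefA (m j k : ℕ) : ℝ :=
  (m.choose j : ℝ) * (k.factorial : ℝ) * stirling1 (m - j) k

lemma descPoch_iter_deriv : ∀ (m k : ℕ),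
    derivative^[k] (descPochhammer ℝ m)
      = ∑ j ∈ range (m+1), coefA m j k • descPochhammer ℝ j := by
  intro m
  induction m with
  | zero =>
    intro k
    cases k with
    | zero => simp [coefA, stirling1]
    | succ k =>
      rw [sum_range_one]
      have h0 : stirling1 0 (k+1) = 0 := stirling1_of_lt (by omega)
      simp [coefA, h0, Function.iterate_succ_apply, Polynomial.iterate_derivative_zero]
  | succ m ih =>
    intro k
    cases k with
    | zero =>
      simp only [Function.iterate_zero, id_eq, Nat.factorial_zero, Nat.cast_one]
      rw [Finset.sum_eq_single (m+1)]
      · simp [coefA, stirling1_zero_right]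
      · intro b hb hbne
        have hb' : m + 1 - b ≠ 0 := by simp only [mem_range] at hb; omega
        simp [coefA, stirling1_zero_right, hb']
      · intro h; exact absurd (self_mem_range_succ (m+1)) h
    | succ k =>
      have key : ∀ j ∈ range (m+1),
          coefA m j (k+1) + (((k+1:ℕ):ℝ) * coefA m (j+1) k
              - coefA m (j+1) (k+1) * ((m:ℝ) - ((j+1:ℕ):ℝ)))
            = coefA (m+1) (j+1) (k+1) := by
        intro j hj
        simp only [mem_range] at hj
        rcases Nat.lt_or_ge j m with hjm | hjm
        · obtain ⟨p, hp⟩ : ∃ p, m - j = p + 1 := ⟨m - j - 1, by omega⟩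
          have h1 : m - (j+1) = p := by omega
          have h2 : ((m:ℝ) - ((j+1:ℕ):ℝ)) = (p:ℝ) := by
            have hm : m = j + 1 + p := by omega
            rw [hm]; push_cast; ring
          have h3 : m + 1 - (j + 1) = p + 1 := by omega
          have h4 : ((m+1).choose (j+1) : ℝ) = (m.choose j : ℝ) + (m.choose (j+1) : ℝ) := by
            rw [Nat.choose_succ_succ]; push_cast; ring
          simp only [coefA, hp, h1, h2, h3, h4, stirling1_rec p k, Nat.factorial_succ]
          push_cast
          ring
        · have hc : m.choose (j+1) = 0 := Nat.choose_eq_zero_of_lt (by omega)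
          have hj' : j = m := by omega
          have hs : stirling1 (m - j) (k+1) = 0 := stirling1_of_lt (by omega)
          have hs2 : stirling1 (m + 1 - (j+1)) (k+1) = 0 := stirling1_of_lt (by omega)
          simp [coefA, hc, hs, hs2]
      have key0 : ((k+1:ℕ):ℝ) * coefA m 0 k - coefA m 0 (k+1) * ((m:ℝ) - ((0:ℕ):ℝ))
          = coefA (m+1) 0 (k+1) := by
        simp only [coefA, Nat.choose_zero_right, Nat.cast_one, Nat.sub_zero, Nat.factorial_succ,
          stirling1_rec m k]
        push_cast
        ring
      calc derivative^[k+1] (descPochhammer ℝ (m+1))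
          = derivative^[k+1] (descPochhammer ℝ m * (X - C (m:ℝ))) := by
            rw [descPochhammer_succ_right, C_eq_natCast]
        _ = derivative^[k+1] (descPochhammer ℝ m) * (X - C (m:ℝ))
              + ((k+1:ℕ):ℝ) • derivative^[k] (descPochhammer ℝ m) :=
            iter_deriv_mul_X_sub_C _ _ _
        _ = (∑ j ∈ range (m+1), coefA m j (k+1) • descPochhammer ℝ j) * (X - C (m:ℝ))
              + ((k+1:ℕ):ℝ) • ∑ j ∈ range (m+1), coefA m j k • descPochhammer ℝ j := by
            rw [ih (k+1), ih k]
        _ = ∑ j ∈ range (m+1), coefA m j (k+1) • descPochhammer ℝ (j+1)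
              + ∑ j ∈ range (m+1), (((k+1:ℕ):ℝ) * coefA m j k
                  - coefA m j (k+1) * ((m:ℝ) - ((j:ℕ):ℝ))) • descPochhammer ℝ j := by
            rw [Finset.sum_mul, Finset.smul_sum, ← Finset.sum_add_distrib,
              ← Finset.sum_add_distrib]
            apply Finset.sum_congr rfl
            intro j hj
            have hP : descPochhammer ℝ j * (X - C (m:ℝ))
                = descPochhammer ℝ (j+1) - ((m:ℝ) - ((j:ℕ):ℝ)) • descPochhammer ℝ j := by
              rw [descPochhammer_succ_right, ← C_eq_natCast, smul_eq_C_mul, map_sub]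
              ring
            rw [smul_mul_assoc, hP, smul_sub, smul_smul, sub_smul, mul_smul]
            module
        _ = ∑ j ∈ range (m+1), coefA m j (k+1) • descPochhammer ℝ (j+1)
              + ((∑ j ∈ range m, (((k+1:ℕ):ℝ) * coefA m (j+1) k
                  - coefA m (j+1) (k+1) * ((m:ℝ) - ((j+1:ℕ):ℝ))) • descPochhammer ℝ (j+1))
                + (((k+1:ℕ):ℝ) * coefA m 0 k
                    - coefA m 0 (k+1) * ((m:ℝ) - ((0:ℕ):ℝ))) • descPochhammer ℝ 0) := by
            rw [Finset.sum_range_succ' (fun j => (((k+1:ℕ):ℝ) * coefA m j k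
                  - coefA m j (k+1) * ((m:ℝ) - ((j:ℕ):ℝ))) • descPochhammer ℝ j) m]
        _ = ∑ j ∈ range (m+1), coefA m j (k+1) • descPochhammer ℝ (j+1)
              + ((∑ j ∈ range (m+1), (((k+1:ℕ):ℝ) * coefA m (j+1) k
                  - coefA m (j+1) (k+1) * ((m:ℝ) - ((j+1:ℕ):ℝ))) • descPochhammer ℝ (j+1))
                + coefA (m+1) 0 (k+1) • descPochhammer ℝ 0) := by
            rw [key0, Finset.sum_range_succ (fun j => (((k+1:ℕ):ℝ) * coefA m (j+1) k
                  - coefA m (j+1) (k+1) * ((m:ℝ) - ((j+1:ℕ):ℝ))) • descPochhammer ℝ (j+1)) m]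
            have hc : m.choose (m+1) = 0 := Nat.choose_eq_zero_of_lt (by omega)
            simp [coefA, hc]
        _ = ∑ j ∈ range (m+1), coefA (m+1) (j+1) (k+1) • descPochhammer ℝ (j+1)
              + coefA (m+1) 0 (k+1) • descPochhammer ℝ 0 := by
            rw [← add_assoc, ← Finset.sum_add_distrib]
            congr 1
            apply Finset.sum_congr rfl
            intro j hj
            rw [← add_smul, key j hj]
        _ = ∑ j ∈ range (m+2), coefA (m+1) j (k+1) • descPochhammer ℝ j := by
            rw [Finset.sum_range_succ' (fun j => coefA (m+1) j (k+1) • descPochhammer ℝ j) (m+1)]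

lemma descPoch_iter_deriv' (m k : ℕ) :
    derivative^[k] (descPochhammer ℝ m)
      = ∑ j ∈ range (m+1-k), coefA m j k • descPochhammer ℝ j := by
  rw [descPoch_iter_deriv]
  symm
  apply Finset.sum_subset
  · exact Finset.range_subset_range.2 (by omega)
  · intro j hj hj2
    simp only [mem_range] at hj hj2
    have : stirling1 (m - j) k = 0 := stirling1_of_lt (by omega)
    simp [coefA, this]

lemma iter_derivative_sum {ι : Type*} (s : Finset ι) (f : ι → ℝ[X]) (k : ℕ) :
    derivative^[k] (∑ i ∈ s, f i) = ∑ i ∈ s, derivative^[k] (f i) := by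
  induction k with
  | zero => simp
  | succ k ih =>
    rw [Function.iterate_succ_apply', ih, map_sum]
    simp [Function.iterate_succ_apply']

lemma iter_derivative_comp (p : ℝ[X]) (c : ℝ) (k : ℕ) :
    derivative^[k] (p.comp (X - C c)) = (derivative^[k] p).comp (X - C c) := by
  induction k with
  | zero => rfl
  | succ k ih =>
    rw [Function.iterate_succ_apply', ih, derivative_comp]
    simp [Function.iterate_succ_apply']

lemma iter_deriv_polyeval (p : ℝ[X]) (k : ℕ) :
    deriv^[k] (fun t : ℝ => p.eval t) = fun t => (derivative^[k] p).eval t := by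
  induction k with
  | zero => rfl
  | succ k ih =>
    rw [Function.iterate_succ_apply', ih]
    funext t
    rw [Polynomial.deriv, Function.iterate_succ_apply' derivative k p]

lemma descPoch_eval (t : ℝ) : ∀ m : ℕ, (descPochhammer ℝ m).eval t = ∏ j ∈ range m, (t - j) := by
  intro m
  induction m with
  | zero => simp
  | succ m ih =>
    rw [descPochhammer_succ_right, eval_mul, ih, Finset.prod_range_succ, eval_sub, eval_X]
    simp

lemma genBinom_eq (t : ℝ) (m : ℕ) :
    genBinom t m = (descPochhammer ℝ m).eval t / (m.factorial : ℝ) := by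
  rw [genBinom, descPoch_eval]

/-- `d^k/da^k K_n(x,a) = ∑_{i=0}^{n-k} K_i(x,a) (k!/(n-i)!) s(n-i,k)`
(the sum being empty when `k > n`). -/
theorem kravchuk_iterated_deriv_a (k n : ℕ) (x a : ℝ) :
    deriv^[k] (fun t : ℝ => K n x t) a
      = ∑ i ∈ Finset.range (n + 1 - k),
          K i x a * ((Nat.factorial k : ℝ) / (Nat.factorial (n - i))) * stirling1 (n - i) k := by
  have hQ : (fun t : ℝ => K n x t)
      = fun t : ℝ => (∑ i ∈ range (n+1),
          (((-1:ℝ)^i * genBinom x i / ((n-i).factorial : ℝ))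
            • ((descPochhammer ℝ (n-i)).comp (X - C x)))).eval t := by
    funext t
    rw [eval_finset_sum]
    unfold K
    apply Finset.sum_congr rfl
    intro i hi
    rw [eval_smul, eval_comp, eval_sub, eval_X, eval_C, genBinom_eq (t - x) (n - i)]
    simp only [smul_eq_mul]
    ring
  rw [hQ, iter_deriv_polyeval, iter_derivative_sum]
  beta_reduce
  rw [eval_finset_sum]
  have step2 : ∀ i ∈ range (n+1),
      (derivative^[k] (((-1:ℝ)^i * genBinom x i / ((n-i).factorial : ℝ))
          • ((descPochhammer ℝ (n-i)).comp (X - C x)))).eval a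
        = ∑ j ∈ range (n - i + 1 - k),
            (-1:ℝ)^i * genBinom x i * genBinom (a-x) j
              * ((k.factorial : ℝ) / ((n-i-j).factorial : ℝ)) * stirling1 (n-i-j) k := by
    intro i hi
    rw [iterate_derivative_smul, iter_derivative_comp, descPoch_iter_deriv' (n-i) k,
      eval_smul, eval_comp, eval_sub, eval_X, eval_C, eval_finset_sum, smul_eq_mul,
      Finset.mul_sum]
    apply Finset.sum_congr rfl
    intro j hj
    simp only [mem_range] at hj
    have hjle : j ≤ n - i := by omega
    have heval : (descPochhammer ℝ j).eval (a-x) = genBinom (a-x) j * (j.factorial : ℝ) := by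
      rw [genBinom_eq]; field_simp
    rw [eval_smul, smul_eq_mul, coefA, heval]
    have hfac : (((n-i).choose j : ℝ)) * (j.factorial : ℝ) * ((n-i-j).factorial : ℝ)
        = ((n-i).factorial : ℝ) := by
      exact_mod_cast congrArg (fun z : ℕ => (z : ℝ)) (Nat.choose_mul_factorial_mul_factorial hjle)
    have h1 : ((n-i).factorial : ℝ) ≠ 0 := Nat.cast_ne_zero.2 (n-i).factorial_ne_zero
    have h2 : ((n-i-j).factorial : ℝ) ≠ 0 := Nat.cast_ne_zero.2 (n-i-j).factorial_ne_zero
    field_simp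
    linear_combination (genBinom x i * stirling1 (n-i-j) k
      * genBinom (a-x) j) * hfac
  rw [Finset.sum_congr rfl step2]
  have hR : ∀ l ∈ range (n+1-k),
      K l x a * ((k.factorial : ℝ) / ((n-l).factorial : ℝ)) * stirling1 (n-l) k
        = ∑ i ∈ range (l+1), (-1:ℝ)^i * genBinom x i * genBinom (a-x) (l-i)
            * ((k.factorial : ℝ) / ((n-l).factorial : ℝ)) * stirling1 (n-l) k := by
    intro l hl
    rw [K, Finset.sum_mul, Finset.sum_mul]
  rw [Finset.sum_congr rfl hR, Finset.sum_sigma', Finset.sum_sigma']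
  refine Finset.sum_nbij' (fun p => ⟨p.1 + p.2, p.1⟩) (fun p => ⟨p.2, p.1 - p.2⟩) ?_ ?_ ?_ ?_ ?_
  · rintro ⟨i, j⟩ hp
    simp only [mem_sigma, mem_range] at hp ⊢
    omega
  · rintro ⟨l, i⟩ hp
    simp only [mem_sigma, mem_range] at hp ⊢
    omega
  · rintro ⟨i, j⟩ hp
    simp only [Nat.add_sub_cancel_left]
  · rintro ⟨l, i⟩ hp
    simp only [mem_sigma, mem_range] at hp
    have h : i + (l - i) = l := by omega
    simp only [h]
  · rintro ⟨i, j⟩ hp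
    simp only [Nat.add_sub_cancel_left, Nat.sub_add_eq]
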